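/- If A ∈ ℝ^{n×n} is Lyapunov diagonally stable, i.e., there exists a positive diagonal matrix P with PA + A^TP negative definite, then every principal submatrix of A is Hurwitz stable (all eigenvalues have negative real part). -/

import Mathlib

open Matrix

lemma posDef_submatrix_of_injective {n k : ℕ} {M : Matrix (Fin n) (Fin n) ℝ}
    (hM : M.PosDef) (f : Fin k → Fin n) (hf : Function.Injective f) :
    (M.submatrix f f).PosDef := by
  refine Matrix.PosDef.of_dotProduct_mulVec_pos ?_ ?_
  · rw [Matrix.IsHermitian, conjTranspose_submatrix, hM.1.eq]
  · intro x hx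
    set y : Fin n → ℝ := fun j => ∑ i, if f i = j then x i else 0 with hy_def
    have hdot : ∀ g : Fin n → ℝ, y ⬝ᵥ g = ∑ i, x i * g (f i) := by
      intro g
      simp only [dotProduct, hy_def, Finset.sum_mul]
      rw [Finset.sum_comm]
      refine Finset.sum_congr rfl fun i _ => ?_
      simp [ite_mul]
    have hy : y ≠ 0 := by
      obtain ⟨i, hi⟩ := Function.ne_iff.mp hx
      intro h0
      apply hi
      have h1 : y (f i) = x i := by simp [hy_def, hf.eq_iff]
      rw [h0] at h1
      simpa using h1.symm
    have hpos := hM.dotProduct_mulVec_pos hy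
    have hMy : ∀ i, (M *ᵥ y) (f i) = ∑ i', x i' * M (f i) (f i') := by
      intro i
      have h2 : (M *ᵥ y) (f i) = y ⬝ᵥ (fun j => M (f i) j) := by
        simp [mulVec, dotProduct, mul_comm]
      rw [h2, hdot]
    have heq : star y ⬝ᵥ M *ᵥ y = star x ⬝ᵥ (M.submatrix f f) *ᵥ x := by
      simp only [star_trivial]
      rw [hdot]
      simp only [hMy]
      simp only [dotProduct, mulVec, submatrix_apply]
      refine Finset.sum_congr rfl fun i _ => ?_
      rw [Finset.mul_sum, Finset.mul_sum]
      exact Finset.sum_congr rfl fun j _ => by ring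
    rwa [heq] at hpos

lemma posDef_complexify {k : ℕ} {N : Matrix (Fin k) (Fin k) ℝ} (hN : N.PosDef)
    {x : Fin k → ℂ} (hx : x ≠ 0) :
    0 < (star x ⬝ᵥ (N.map (algebraMap ℝ ℂ)) *ᵥ x).re := by
  set u : Fin k → ℝ := fun i => (x i).re with hu
  set v : Fin k → ℝ := fun i => (x i).im with hv
  have key : (star x ⬝ᵥ (N.map (algebraMap ℝ ℂ)) *ᵥ x).re
      = u ⬝ᵥ N *ᵥ u + v ⬝ᵥ N *ᵥ v := by
    simp only [dotProduct, mulVec, map_apply, Pi.star_apply, Complex.re_sum,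
      Complex.mul_re, Complex.mul_im, Complex.im_sum, Complex.coe_algebraMap,
      Complex.ofReal_re, Complex.ofReal_im, RCLike.star_def, Complex.conj_re,
      Complex.conj_im, zero_mul, sub_zero, zero_add, Finset.mul_sum,
      ← Finset.sum_add_distrib]
    refine Finset.sum_congr rfl fun i _ => Finset.sum_congr rfl fun j _ => ?_
    ring
  rw [key]
  have hcases : u ≠ 0 ∨ v ≠ 0 := by
    by_contra hc
    push_neg at hc
    apply hx
    funext i
    have h1 : u i = 0 := by rw [hc.1]; rfl
    have h2 : v i = 0 := by rw [hc.2]; rfl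
    exact Complex.ext h1 h2
  rcases hcases with hu0 | hv0
  · have h1 := hN.dotProduct_mulVec_pos hu0
    have h2 := hN.posSemidef.dotProduct_mulVec_nonneg v
    simp only [star_trivial] at h1 h2
    linarith
  · have h1 := hN.dotProduct_mulVec_pos hv0
    have h2 := hN.posSemidef.dotProduct_mulVec_nonneg u
    simp only [star_trivial] at h1 h2
    linarith

lemma re_neg_of_lyapunov {k : ℕ} (B : Matrix (Fin k) (Fin k) ℝ) (d : Fin k → ℝ)
    (hd : ∀ i, 0 < d i)
    (hN : (-(Matrix.diagonal d * B + Bᵀ * Matrix.diagonal d)).PosDef)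
    (μ : ℂ) (hμ : μ ∈ spectrum ℂ (B.map (algebraMap ℝ ℂ))) : μ.re < 0 := by
  set Bc := B.map (algebraMap ℝ ℂ) with hBc
  rw [← AlgEquiv.spectrum_eq (Matrix.toLinAlgEquiv' (R := ℂ)) Bc,
    ← Module.End.hasEigenvalue_iff_mem_spectrum] at hμ
  obtain ⟨x, hx⟩ := hμ.exists_hasEigenvector
  have hxne : x ≠ 0 := hx.right
  have hxeq : Bc *ᵥ x = μ • x := by
    have h3 := hx.apply_eq_smul
    rwa [Matrix.toLinAlgEquiv'_apply] at h3
  set Pc := (Matrix.diagonal d).map (algebraMap ℝ ℂ) with hPc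
  set s : ℂ := star x ⬝ᵥ Pc *ᵥ x with hs
  have hsre : 0 < s.re := posDef_complexify (Matrix.PosDef.diagonal hd) hxne
  have hstar : Bc *ᵥ star x = star (Bc *ᵥ x) := by
    funext j
    simp only [mulVec, dotProduct, Pi.star_apply, star_sum, star_mul', hBc, map_apply,
      Complex.coe_algebraMap, RCLike.star_def, Complex.conj_ofReal]
  have hterm2 : star x ⬝ᵥ ((Bᵀ.map (algebraMap ℝ ℂ)) *ᵥ (Pc *ᵥ x))
      = (starRingEnd ℂ) μ * s := by
    rw [Matrix.transpose_map, dotProduct_mulVec, vecMul_transpose, hstar, hxeq]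
    simp only [star_smul, smul_dotProduct, smul_eq_mul, hs, RCLike.star_def]
  have hterm1 : star x ⬝ᵥ (Pc *ᵥ (Bc *ᵥ x)) = μ * s := by
    rw [hxeq, mulVec_smul, dotProduct_smul, smul_eq_mul, hs]
  have hcalc : star x ⬝ᵥ ((Matrix.diagonal d * B + Bᵀ * Matrix.diagonal d).map
      (algebraMap ℝ ℂ)) *ᵥ x = (↑(2 * μ.re) : ℂ) * s := by
    rw [Matrix.map_add _ (fun a b => map_add _ a b), Matrix.map_mul, Matrix.map_mul,
      add_mulVec, dotProduct_add, ← mulVec_mulVec, ← mulVec_mulVec, ← hBc, ← hPc,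
      hterm1, hterm2, ← add_mul, Complex.add_conj]
  have hmapneg : (-(Matrix.diagonal d * B + Bᵀ * Matrix.diagonal d)).map (algebraMap ℝ ℂ)
      = -((Matrix.diagonal d * B + Bᵀ * Matrix.diagonal d).map (algebraMap ℝ ℂ)) := by
    ext i j; simp
  have hlt := posDef_complexify hN hxne
  rw [hmapneg, neg_mulVec, dotProduct_neg, Complex.neg_re, hcalc,
    Complex.re_ofReal_mul] at hlt
  nlinarith

/-- Spectral abscissa: supremum of real parts of (complex) eigenvalues. -/
noncomputable def specAbs {n : ℕ} (A : Matrix (Fin n) (Fin n) ℝ) : ℝ :=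
  sSup {r : ℝ | ∃ μ : ℂ, μ ∈ spectrum ℂ (A.map (algebraMap ℝ ℂ)) ∧ r = μ.re}

/-- If `A` is Lyapunov diagonally stable (there is a positive diagonal `P` with
`PA + AᵀP` negative definite), then every principal submatrix of `A` is
Hurwitz stable. -/
theorem lds_imp_totallyHurwitz {n : ℕ} (A : Matrix (Fin n) (Fin n) ℝ)
    (η : Fin n → ℝ) (hη : ∀ i, 0 < η i)
    (h : (-(Matrix.diagonal η * A + Aᵀ * Matrix.diagonal η)).PosDef) :
    ∀ (k : ℕ), 0 < k → ∀ f : Fin k → Fin n, Function.Injective f →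
      specAbs (A.submatrix f f) < 0 := by
  intro k hk f hf
  have hsub : (-(Matrix.diagonal (η ∘ f) * (A.submatrix f f)
        + (A.submatrix f f)ᵀ * Matrix.diagonal (η ∘ f)))
      = (-(Matrix.diagonal η * A + Aᵀ * Matrix.diagonal η)).submatrix f f := by
    ext i j
    simp [Matrix.diagonal_mul, Matrix.mul_diagonal, Function.comp]
  have hNB : (-(Matrix.diagonal (η ∘ f) * (A.submatrix f f)
      + (A.submatrix f f)ᵀ * Matrix.diagonal (η ∘ f))).PosDef := by
    rw [hsub]; exact posDef_submatrix_of_injective h f hf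
  have hkey : ∀ μ : ℂ, μ ∈ spectrum ℂ ((A.submatrix f f).map (algebraMap ℝ ℂ)) →
      μ.re < 0 :=
    re_neg_of_lyapunov (A.submatrix f f) (η ∘ f) (fun i => hη (f i)) hNB
  haveI : Nonempty (Fin k) := Fin.pos_iff_nonempty.mp hk
  obtain ⟨μ0, hμ0⟩ := Module.End.exists_eigenvalue
    (Matrix.toLinAlgEquiv' ((A.submatrix f f).map (algebraMap ℝ ℂ)))
  have hμ0' : μ0 ∈ spectrum ℂ ((A.submatrix f f).map (algebraMap ℝ ℂ)) := by
    rw [← AlgEquiv.spectrum_eq (Matrix.toLinAlgEquiv' (R := ℂ))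
      ((A.submatrix f f).map (algebraMap ℝ ℂ))]
    exact Module.End.hasEigenvalue_iff_mem_spectrum.mp hμ0
  have hne : {r : ℝ | ∃ μ : ℂ,
      μ ∈ spectrum ℂ ((A.submatrix f f).map (algebraMap ℝ ℂ)) ∧ r = μ.re}.Nonempty :=
    ⟨μ0.re, μ0, hμ0', rfl⟩
  have hfin : {r : ℝ | ∃ μ : ℂ,
      μ ∈ spectrum ℂ ((A.submatrix f f).map (algebraMap ℝ ℂ)) ∧ r = μ.re}.Finite := by
    refine ((Matrix.finite_spectrum ((A.submatrix f f).map (algebraMap ℝ ℂ))).image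
      Complex.re).subset ?_
    rintro r ⟨μ, hμ, rfl⟩
    exact ⟨μ, hμ, rfl⟩
  obtain ⟨μ, hμ, hre⟩ := Set.Nonempty.csSup_mem hne hfin
  unfold specAbs
  rw [hre]
  exact hkey μ hμ
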